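/- Let B be an r-regular multigraph whose underlying simple graph is the Petersen graph, in which every odd cut has size at least r. Then the edge–perfect-matching system Ax = 1 for B has a nonnegative solution x whose entries are all integers or all with at most 6 entries equal to exactly 1/2 (and all other nonzero entries positive integers), supported on a linearly independent set of perfect matchings. -/

import Mathlib

set_option linter.unusedSectionVars false


open Finset
open scoped Classical

/-- A multigraph: a type of vertices, a type of edges (parallel edges allowed),
and an assignment of an unordered pair of endpoints to each edge. -/
structure Multigraph (V E : Type) where
  ends : E → Sym2 V

namespace Multigraph

variable {V E : Type} [Fintype V] [Fintype E] (G : Multigraph V E)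

/-- The edge `e` is incident with the vertex `v`. -/
def Inc (e : E) (v : V) : Prop := v ∈ G.ends e

/-- The graph has no loops. -/
def Loopless : Prop := ∀ e : E, ¬ (G.ends e).IsDiag

/-- The degree of a vertex: the number of edges incident with it. -/
noncomputable def degree (v : V) : ℕ := (univ.filter fun e => G.Inc e v).card

/-- A perfect matching: a set of edges covering every vertex exactly once. -/
def IsPM (M : Finset E) : Prop := ∀ v : V, (M.filter fun e => G.Inc e v).card = 1

/-- The cut determined by a shore `S`: all edges with exactly one endpoint in `S`. -/
noncomputable def cut (S : Finset V) : Finset E :=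
  univ.filter fun e => ∃ u v : V, G.ends e = s(u, v) ∧ u ∈ S ∧ v ∉ S

/-- `S` is the shore of an odd cut. -/
def IsOddShore (_G : Multigraph V E) (S : Finset V) : Prop := Odd S.card ∧ Odd Sᶜ.card

/-- `S` is the shore of a tight cut: an odd cut meeting every perfect matching
in exactly one edge. -/
def IsTightShore (S : Finset V) : Prop :=
  G.IsOddShore S ∧ ∀ M : Finset E, G.IsPM M → (M ∩ G.cut S).card = 1

/-- The underlying simple graph of a multigraph. -/
def adj : SimpleGraph V := SimpleGraph.fromRel (fun u v => ∃ e : E, G.ends e = s(u, v))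

/-- A matching-covered graph: connected, with at least one edge, and every
edge lies in some perfect matching. -/
def MatchingCovered : Prop :=
  G.adj.Connected ∧ Nonempty E ∧ ∀ e : E, ∃ M : Finset E, G.IsPM M ∧ e ∈ M

/-- `G` is an `r`-graph: `r`-regular, loopless, and every odd cut has at least `r` edges. -/
def IsRGraph (r : ℕ) : Prop :=
  G.Loopless ∧ (∀ v : V, G.degree v = r) ∧
    ∀ S : Finset V, G.IsOddShore S → r ≤ (G.cut S).card

end Multigraph

/-- The vertices of the Petersen graph: 2-element subsets of a 5-element set. -/
abbrev PetersenV := {s : Finset (Fin 5) // s.card = 2}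

/-- The Petersen graph, realized as the Kneser graph `K(5,2)`. -/
def Petersen : SimpleGraph PetersenV where
  Adj a b := Disjoint a.1 b.1 ∧ a ≠ b
  symm := ⟨fun _ _ h => ⟨h.1.symm, Ne.symm h.2⟩⟩
  loopless := ⟨fun _ h => h.2 rfl⟩

def pv : Fin 10 → PetersenV := ![⟨{0, 1}, by decide⟩, ⟨{0, 2}, by decide⟩, ⟨{0, 3}, by decide⟩, ⟨{0, 4}, by decide⟩, ⟨{1, 2}, by decide⟩, ⟨{1, 3}, by decide⟩, ⟨{1, 4}, by decide⟩, ⟨{2, 3}, by decide⟩, ⟨{2, 4}, by decide⟩, ⟨{3, 4}, by decide⟩]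

def vp (v : PetersenV) : Fin 10 :=
  if v.1 = {0, 1} then 0 else if v.1 = {0, 2} then 1 else if v.1 = {0, 3} then 2 else if v.1 = {0, 4} then 3 else if v.1 = {1, 2} then 4 else if v.1 = {1, 3} then 5 else if v.1 = {1, 4} then 6 else if v.1 = {2, 3} then 7 else if v.1 = {2, 4} then 8 else 9

def adj10 : Fin 10 → Fin 10 → Bool := ![![false, false, false, false, false, false, false, true, true, true], ![false, false, false, false, false, true, true, false, false, true], ![false, false, false, false, true, false, true, false, true, false], ![false, false, false, false, true, true, false, true, false, false], ![false, false, true, true, false, false, false, false, false, true], ![false, true, false, true, false, false, false, false, true, false], ![false, true, true, false, false, false, false, true, false, false], ![true, false, false, true, false, false, true, false, false, false], ![true, false, true, false, false, true, false, false, false, false], ![true, true, false, false, true, false, false, false, false, false]]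

def S10 : Fin 6 → Fin 10 → Bool := ![![true, true, false, false, false, true, false, false, true, true], ![true, false, true, false, true, false, false, false, true, true], ![true, true, false, false, false, false, true, true, false, true], ![true, false, false, true, true, false, false, true, false, true], ![true, false, false, true, false, true, false, true, true, false], ![true, false, true, false, false, false, true, true, true, false]]

def lo10 : Fin 10 → Fin 10 → Fin 6 := ![![0, 0, 0, 0, 0, 0, 0, 0, 2, 4], ![0, 0, 0, 0, 0, 2, 0, 0, 0, 1], ![0, 0, 0, 0, 3, 0, 1, 0, 0, 0], ![0, 0, 0, 0, 1, 0, 0, 2, 0, 0], ![0, 0, 3, 1, 0, 0, 0, 0, 0, 0], ![0, 2, 0, 0, 0, 0, 0, 0, 1, 0], ![0, 0, 1, 0, 0, 0, 0, 3, 0, 0], ![0, 0, 0, 2, 0, 0, 3, 0, 0, 0], ![2, 0, 0, 0, 0, 1, 0, 0, 0, 0], ![4, 1, 0, 0, 0, 0, 0, 0, 0, 0]]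

def hi10 : Fin 10 → Fin 10 → Fin 6 := ![![0, 0, 0, 0, 0, 0, 0, 1, 3, 5], ![0, 0, 0, 0, 0, 4, 5, 0, 0, 3], ![0, 0, 0, 0, 5, 0, 2, 0, 4, 0], ![0, 0, 0, 0, 4, 3, 0, 5, 0, 0], ![0, 0, 5, 4, 0, 0, 0, 0, 0, 2], ![0, 4, 0, 3, 0, 0, 0, 0, 5, 0], ![0, 5, 2, 0, 0, 0, 0, 4, 0, 0], ![1, 0, 0, 5, 0, 0, 4, 0, 0, 0], ![3, 0, 4, 0, 0, 5, 0, 0, 0, 0], ![5, 3, 0, 0, 2, 0, 0, 0, 0, 0]]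

def q10 : Fin 10 → Fin 10 → Fin 10 → ℤ := ![![![0, 0, 0, 0, 0, 0, 0, 0, 0, 0], ![0, 0, 0, 0, 0, 0, 0, 0, 0, 0], ![0, 0, 0, 0, 0, 0, 0, 0, 0, 0], ![0, 0, 0, 0, 0, 0, 0, 0, 0, 0], ![0, 0, 0, 0, 0, 0, 0, 0, 0, 0], ![0, 0, 0, 0, 0, 0, 0, 0, 0, 0], ![0, 0, 0, 0, 0, 0, 0, 0, 0, 0], ![(-2 : ℤ), 0, 0, 2, 0, 0, 2, (-2 : ℤ), 2, 2], ![(-2 : ℤ), 0, 2, 0, 0, 2, 0, 2, (-2 : ℤ), 2], ![(-2 : ℤ), 2, 0, 0, 2, 0, 0, 2, 2, (-2 : ℤ)]],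
  ![![0, 0, 0, 0, 0, 0, 0, 0, 0, 0], ![0, 0, 0, 0, 0, 0, 0, 0, 0, 0], ![0, 0, 0, 0, 0, 0, 0, 0, 0, 0], ![0, 0, 0, 0, 0, 0, 0, 0, 0, 0], ![0, 0, 0, 0, 0, 0, 0, 0, 0, 0], ![0, (-2 : ℤ), 0, 2, 0, (-2 : ℤ), 2, 0, 2, 2], ![0, (-2 : ℤ), 2, 0, 0, 2, (-2 : ℤ), 2, 0, 2], ![0, 0, 0, 0, 0, 0, 0, 0, 0, 0], ![0, 0, 0, 0, 0, 0, 0, 0, 0, 0], ![2, (-2 : ℤ), 0, 0, 2, 2, 2, 0, 0, (-2 : ℤ)]],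
  ![![0, 0, 0, 0, 0, 0, 0, 0, 0, 0], ![0, 0, 0, 0, 0, 0, 0, 0, 0, 0], ![0, 0, 0, 0, 0, 0, 0, 0, 0, 0], ![0, 0, 0, 0, 0, 0, 0, 0, 0, 0], ![0, 0, (-2 : ℤ), 2, (-2 : ℤ), 0, 2, 0, 2, 2], ![0, 0, 0, 0, 0, 0, 0, 0, 0, 0], ![0, 2, (-2 : ℤ), 0, 2, 0, (-2 : ℤ), 2, 2, 0], ![0, 0, 0, 0, 0, 0, 0, 0, 0, 0], ![2, 0, (-2 : ℤ), 0, 2, 2, 2, 0, (-2 : ℤ), 0], ![0, 0, 0, 0, 0, 0, 0, 0, 0, 0]],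
  ![![0, 0, 0, 0, 0, 0, 0, 0, 0, 0], ![0, 0, 0, 0, 0, 0, 0, 0, 0, 0], ![0, 0, 0, 0, 0, 0, 0, 0, 0, 0], ![0, 0, 0, 0, 0, 0, 0, 0, 0, 0], ![0, 0, 2, (-2 : ℤ), (-2 : ℤ), 2, 0, 2, 0, 2], ![0, 2, 0, (-2 : ℤ), 2, (-2 : ℤ), 0, 2, 2, 0], ![0, 0, 0, 0, 0, 0, 0, 0, 0, 0], ![2, 0, 0, (-2 : ℤ), 2, 2, 2, (-2 : ℤ), 0, 0], ![0, 0, 0, 0, 0, 0, 0, 0, 0, 0], ![0, 0, 0, 0, 0, 0, 0, 0, 0, 0]],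
  ![![0, 0, 0, 0, 0, 0, 0, 0, 0, 0], ![0, 0, 0, 0, 0, 0, 0, 0, 0, 0], ![0, 0, (-2 : ℤ), 2, (-2 : ℤ), 0, 2, 0, 2, 2], ![0, 0, 2, (-2 : ℤ), (-2 : ℤ), 2, 0, 2, 0, 2], ![0, 0, 0, 0, 0, 0, 0, 0, 0, 0], ![0, 0, 0, 0, 0, 0, 0, 0, 0, 0], ![0, 0, 0, 0, 0, 0, 0, 0, 0, 0], ![0, 0, 0, 0, 0, 0, 0, 0, 0, 0], ![0, 0, 0, 0, 0, 0, 0, 0, 0, 0], ![2, 2, 2, 2, (-2 : ℤ), 0, 0, 0, 0, (-2 : ℤ)]],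
  ![![0, 0, 0, 0, 0, 0, 0, 0, 0, 0], ![0, (-2 : ℤ), 0, 2, 0, (-2 : ℤ), 2, 0, 2, 2], ![0, 0, 0, 0, 0, 0, 0, 0, 0, 0], ![0, 2, 0, (-2 : ℤ), 2, (-2 : ℤ), 0, 2, 2, 0], ![0, 0, 0, 0, 0, 0, 0, 0, 0, 0], ![0, 0, 0, 0, 0, 0, 0, 0, 0, 0], ![0, 0, 0, 0, 0, 0, 0, 0, 0, 0], ![0, 0, 0, 0, 0, 0, 0, 0, 0, 0], ![2, 2, 2, 2, 0, (-2 : ℤ), 0, 0, (-2 : ℤ), 0], ![0, 0, 0, 0, 0, 0, 0, 0, 0, 0]],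
  ![![0, 0, 0, 0, 0, 0, 0, 0, 0, 0], ![0, (-2 : ℤ), 2, 0, 0, 2, (-2 : ℤ), 2, 0, 2], ![0, 2, (-2 : ℤ), 0, 2, 0, (-2 : ℤ), 2, 2, 0], ![0, 0, 0, 0, 0, 0, 0, 0, 0, 0], ![0, 0, 0, 0, 0, 0, 0, 0, 0, 0], ![0, 0, 0, 0, 0, 0, 0, 0, 0, 0], ![0, 0, 0, 0, 0, 0, 0, 0, 0, 0], ![2, 2, 2, 2, 0, 0, (-2 : ℤ), (-2 : ℤ), 0, 0], ![0, 0, 0, 0, 0, 0, 0, 0, 0, 0], ![0, 0, 0, 0, 0, 0, 0, 0, 0, 0]],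
  ![![(-2 : ℤ), 0, 0, 2, 0, 0, 2, (-2 : ℤ), 2, 2], ![0, 0, 0, 0, 0, 0, 0, 0, 0, 0], ![0, 0, 0, 0, 0, 0, 0, 0, 0, 0], ![2, 0, 0, (-2 : ℤ), 2, 2, 2, (-2 : ℤ), 0, 0], ![0, 0, 0, 0, 0, 0, 0, 0, 0, 0], ![0, 0, 0, 0, 0, 0, 0, 0, 0, 0], ![2, 2, 2, 2, 0, 0, (-2 : ℤ), (-2 : ℤ), 0, 0], ![0, 0, 0, 0, 0, 0, 0, 0, 0, 0], ![0, 0, 0, 0, 0, 0, 0, 0, 0, 0], ![0, 0, 0, 0, 0, 0, 0, 0, 0, 0]],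
  ![![(-2 : ℤ), 0, 2, 0, 0, 2, 0, 2, (-2 : ℤ), 2], ![0, 0, 0, 0, 0, 0, 0, 0, 0, 0], ![2, 0, (-2 : ℤ), 0, 2, 2, 2, 0, (-2 : ℤ), 0], ![0, 0, 0, 0, 0, 0, 0, 0, 0, 0], ![0, 0, 0, 0, 0, 0, 0, 0, 0, 0], ![2, 2, 2, 2, 0, (-2 : ℤ), 0, 0, (-2 : ℤ), 0], ![0, 0, 0, 0, 0, 0, 0, 0, 0, 0], ![0, 0, 0, 0, 0, 0, 0, 0, 0, 0], ![0, 0, 0, 0, 0, 0, 0, 0, 0, 0], ![0, 0, 0, 0, 0, 0, 0, 0, 0, 0]],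
  ![![(-2 : ℤ), 2, 0, 0, 2, 0, 0, 2, 2, (-2 : ℤ)], ![2, (-2 : ℤ), 0, 0, 2, 2, 2, 0, 0, (-2 : ℤ)], ![0, 0, 0, 0, 0, 0, 0, 0, 0, 0], ![0, 0, 0, 0, 0, 0, 0, 0, 0, 0], ![2, 2, 2, 2, (-2 : ℤ), 0, 0, 0, 0, (-2 : ℤ)], ![0, 0, 0, 0, 0, 0, 0, 0, 0, 0], ![0, 0, 0, 0, 0, 0, 0, 0, 0, 0], ![0, 0, 0, 0, 0, 0, 0, 0, 0, 0], ![0, 0, 0, 0, 0, 0, 0, 0, 0, 0], ![0, 0, 0, 0, 0, 0, 0, 0, 0, 0]]]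

def cross10 (i : Fin 6) (k l : Fin 10) : Bool := S10 i k != S10 i l

lemma pm_unique : ∀ (i : Fin 6) (k : Fin 10),
    ((univ : Finset (Fin 10)).filter fun l => adj10 k l = true ∧ cross10 i k l = true).card = 1 := by decide

lemma lo_hi_fact : ∀ k l, adj10 k l = true →
    lo10 k l < hi10 k l ∧ lo10 k l = lo10 l k ∧ hi10 k l = hi10 l k ∧
    ∀ i, cross10 i k l = (decide (i = lo10 k l) || decide (i = hi10 k l)) := by decide

lemma adj10_symm : ∀ k l, adj10 k l = adj10 l k := by decide

lemma q_symm : ∀ k l m, adj10 k l = true → q10 k l m = q10 l k m := by decide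

lemma q_sum : ∀ k l, adj10 k l = true → ∑ m : Fin 10, q10 k l m = 4 := by decide

lemma Scard : ∀ i, ((univ : Finset (Fin 10)).filter fun k => S10 i k = true).card = 5 := by decide

lemma pair_ex : ∀ i j : Fin 6, i < j → ∃ k l, adj10 k l = true ∧ lo10 k l = i ∧ hi10 k l = j := by decide

lemma sep_ex : ∀ i j : Fin 6, i ≠ j → ∃ k l, adj10 k l = true ∧ cross10 i k l = true ∧ cross10 j k l = false := by decide

lemma q_main : ∀ k l k' l' : Fin 10, adj10 k l = true → adj10 k' l' = true →
    2 * (if cross10 (lo10 k l) k' l' = true then (1:ℤ) else 0)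
    + 2 * (if cross10 (hi10 k l) k' l' = true then (1:ℤ) else 0)
    - 8 * (if (k' = k ∧ l' = l) ∨ (k' = l ∧ l' = k) then (1:ℤ) else 0)
    = q10 k l k' + q10 k l l' := by decide

lemma vp_pv : ∀ k : Fin 10, vp (pv k) = k := by decide

set_option maxHeartbeats 800000 in
lemma pv_vp : ∀ v : PetersenV, pv (vp v) = v := by decide

set_option maxHeartbeats 800000 in
lemma adj_pv : ∀ k l : Fin 10, (Disjoint (pv k).1 (pv l).1 ∧ pv k ≠ pv l) ↔ adj10 k l = true := by decide

lemma lo10_symm : ∀ k l, lo10 k l = lo10 l k := by decide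
lemma hi10_symm : ∀ k l, hi10 k l = hi10 l k := by decide
lemma q10_symm : ∀ k l m, q10 k l m = q10 l k m := by decide
lemma cross10_symm : ∀ i k l, cross10 i k l = cross10 i l k := by decide

namespace PBS
open Multigraph

def eqv : PetersenV ≃ Fin 10 := ⟨vp, pv, pv_vp, vp_pv⟩

def crossS (i : Fin 6) : Sym2 (Fin 10) → Bool :=
  Sym2.lift ⟨fun k l => cross10 i k l, cross10_symm i⟩


def loS : Sym2 (Fin 10) → Fin 6 := Sym2.lift ⟨lo10, lo10_symm⟩
def hiS : Sym2 (Fin 10) → Fin 6 := Sym2.lift ⟨hi10, hi10_symm⟩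

variable {V E : Type} [Fintype V] [Fintype E] (G : Multigraph V E) (φ : G.adj ≃g Petersen)

noncomputable def ψ : V ≃ Fin 10 := φ.toEquiv.trans eqv

noncomputable def πe (e : E) : Sym2 (Fin 10) := (G.ends e).map (ψ G φ)

lemma adj_iff10 (a b : PetersenV) : Petersen.Adj a b ↔ adj10 (vp a) (vp b) = true := by
  constructor
  · intro h
    have h2 : Disjoint a.1 b.1 ∧ a ≠ b := h
    have := (adj_pv (vp a) (vp b)).mp (by rw [pv_vp a, pv_vp b]; exact h2)
    exact this
  · intro h
    have := (adj_pv (vp a) (vp b)).mpr h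
    rw [pv_vp a, pv_vp b] at this
    exact this

lemma ends_rep (hl : G.Loopless) (e : E) :
    ∃ u v : V, G.ends e = s(u, v) ∧ u ≠ v ∧ adj10 (ψ G φ u) (ψ G φ v) = true := by
  obtain ⟨⟨u, v⟩, h⟩ := Quot.exists_rep (G.ends e)
  have h' : G.ends e = s(u, v) := h.symm
  have hne : u ≠ v := by
    intro huv
    apply hl e
    rw [h']
    subst huv
    exact Sym2.mk_isDiag_iff.mpr rfl
  have hadj : G.adj.Adj u v :=
    (SimpleGraph.fromRel_adj _ u v).mpr ⟨hne, Or.inl ⟨e, h'⟩⟩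
  have hP : Petersen.Adj (φ u) (φ v) := φ.map_adj_iff.mpr hadj
  exact ⟨u, v, h', hne, (adj_iff10 (φ u) (φ v)).mp hP⟩

lemma pi_pair (e : E) (u v : V) (h : G.ends e = s(u, v)) :
    πe G φ e = s(ψ G φ u, ψ G φ v) := by
  rw [πe, h, Sym2.map_pair_eq]

lemma exists_copy (k l : Fin 10) (hadj : adj10 k l = true) : ∃ e : E, πe G φ e = s(k, l) := by
  have hP : Petersen.Adj (pv k) (pv l) := by
    rw [adj_iff10, vp_pv, vp_pv]; exact hadj
  have hadjG : G.adj.Adj (φ.symm (pv k)) (φ.symm (pv l)) := by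
    rw [← φ.map_adj_iff, RelIso.apply_symm_apply, RelIso.apply_symm_apply]; exact hP
  have hadjG' := (SimpleGraph.fromRel_adj _ _ _).mp hadjG
  have hk : ψ G φ (φ.symm (pv k)) = k := by
    show eqv (φ.toEquiv (φ.symm (pv k))) = k
    have : φ.toEquiv (φ.symm (pv k)) = pv k := RelIso.apply_symm_apply φ (pv k)
    rw [this]; exact vp_pv k
  have hlv : ψ G φ (φ.symm (pv l)) = l := by
    show eqv (φ.toEquiv (φ.symm (pv l))) = l
    have : φ.toEquiv (φ.symm (pv l)) = pv l := RelIso.apply_symm_apply φ (pv l)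
    rw [this]; exact vp_pv l
  rcases hadjG'.2 with ⟨e, he⟩ | ⟨e, he⟩
  · exact ⟨e, by rw [pi_pair G φ e _ _ he, hk, hlv]⟩
  · exact ⟨e, by rw [pi_pair G φ e _ _ he, hk, hlv, Sym2.eq_swap]⟩

lemma inc_iff (e : E) (v : V) : G.Inc e v ↔ (ψ G φ v) ∈ πe G φ e := by
  rw [Multigraph.Inc, πe, Sym2.mem_map]
  constructor
  · intro h; exact ⟨v, h, rfl⟩
  · rintro ⟨w, hw, hww⟩
    have : w = v := (ψ G φ).injective hww
    rwa [← this]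

lemma inc_filter (e : E) (u v : V) (h : G.ends e = s(u, v)) :
    univ.filter (fun w => G.Inc e w) = {u, v} := by
  ext w
  simp only [Finset.mem_filter, Finset.mem_univ, true_and, Finset.mem_insert,
    Finset.mem_singleton]
  rw [Multigraph.Inc, h, Sym2.mem_iff]

noncomputable def cE (f : Sym2 (Fin 10)) : ℕ := (univ.filter fun e : E => πe G φ e = f).card

noncomputable def slotE (f : Sym2 (Fin 10)) : {e : E // πe G φ e = f} ≃ Fin (cE G φ f) :=
  Fintype.equivFinOfCardEq (by rw [Fintype.card_subtype]; rfl)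

noncomputable def slot (e : E) : ℕ := (slotE G φ (πe G φ e) ⟨e, rfl⟩).val

noncomputable def pick (f : Sym2 (Fin 10)) (t : ℕ) (ht : t < cE G φ f) : E :=
  ((slotE G φ f).symm ⟨t, ht⟩).val

lemma slot_lt (e : E) : slot G φ e < cE G φ (πe G φ e) := (slotE G φ (πe G φ e) ⟨e, rfl⟩).isLt

lemma pick_pi (f : Sym2 (Fin 10)) (t : ℕ) (ht : t < cE G φ f) :
    πe G φ (pick G φ f t ht) = f := ((slotE G φ f).symm ⟨t, ht⟩).prop

lemma slot_eq_of (e : E) (f : Sym2 (Fin 10)) (h : πe G φ e = f) :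
    slot G φ e = (slotE G φ f ⟨e, h⟩).val := by subst h; rfl

lemma slot_pick (f : Sym2 (Fin 10)) (t : ℕ) (ht : t < cE G φ f) :
    slot G φ (pick G φ f t ht) = t := by
  rw [slot_eq_of G φ _ f (pick_pi G φ f t ht)]
  have : (⟨pick G φ f t ht, pick_pi G φ f t ht⟩ : {e : E // πe G φ e = f})
      = (slotE G φ f).symm ⟨t, ht⟩ := Subtype.ext rfl
  rw [this, Equiv.apply_symm_apply]

lemma pick_slot (e : E) (h : slot G φ e < cE G φ (πe G φ e)) :
    pick G φ (πe G φ e) (slot G φ e) h = e := by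
  rw [pick]
  have : (⟨slot G φ e, h⟩ : Fin (cE G φ (πe G φ e))) = slotE G φ (πe G φ e) ⟨e, rfl⟩ :=
    Fin.ext rfl
  rw [this, Equiv.symm_apply_apply]

lemma fiber_unique (e e' : E) (hp : πe G φ e = πe G φ e') (hs : slot G φ e = slot G φ e') :
    e = e' := by
  have h1 := pick_slot G φ e (slot_lt G φ e)
  have h2 := pick_slot G φ e' (slot_lt G φ e')
  rw [← h1, ← h2]
  congr 1

noncomputable def Ti (i : Fin 6) : Finset V := univ.filter (fun v => S10 i (ψ G φ v) = true)

lemma cross_true_iff (i : Fin 6) (k l : Fin 10) :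
    cross10 i k l = true ↔ S10 i k ≠ S10 i l := by
  simp [cross10, bne_iff_ne]

lemma mem_cut_iff (e : E) (u v : V) (h : G.ends e = s(u, v)) (i : Fin 6) :
    e ∈ G.cut (Ti G φ i) ↔ cross10 i (ψ G φ u) (ψ G φ v) = true := by
  rw [Multigraph.cut, Finset.mem_filter]
  simp only [Finset.mem_univ, true_and]
  constructor
  · rintro ⟨x, y, hxy, hx, hy⟩
    rw [h] at hxy
    simp only [Ti, Finset.mem_filter, Finset.mem_univ, true_and] at hx hy
    rw [Sym2.eq_iff] at hxy
    rw [cross_true_iff]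
    rcases hxy with ⟨hx1, hy1⟩ | ⟨hx1, hy1⟩
    · subst hx1; subst hy1
      intro hcon; rw [hcon] at hx; exact hy hx
    · subst hx1; subst hy1
      intro hcon; rw [hcon] at hy; exact hy hx
  · intro hc
    rw [cross_true_iff] at hc
    by_cases hu : S10 i (ψ G φ u) = true
    · refine ⟨u, v, h, ?_, ?_⟩
      · simp only [Ti, Finset.mem_filter, Finset.mem_univ, true_and]; exact hu
      · simp only [Ti, Finset.mem_filter, Finset.mem_univ, true_and]
        intro hv; exact hc (by rw [hu, hv])
    · refine ⟨v, u, by rw [h, Sym2.eq_swap], ?_, ?_⟩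
      · simp only [Ti, Finset.mem_filter, Finset.mem_univ, true_and]
        by_cases hv : S10 i (ψ G φ v) = true
        · exact hv
        · rw [Bool.not_eq_true] at hu hv
          exact absurd (hu.trans hv.symm) hc
      · simp only [Ti, Finset.mem_filter, Finset.mem_univ, true_and]; exact hu
  
lemma cut_eq (hl : G.Loopless) (i : Fin 6) :
    G.cut (Ti G φ i) = univ.filter fun e => crossS i (πe G φ e) = true := by
  ext e
  obtain ⟨u, v, h, hne, hadj⟩ := ends_rep G φ hl e
  rw [mem_cut_iff G φ e u v h i, Finset.mem_filter]
  simp only [Finset.mem_univ, true_and]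
  rw [pi_pair G φ e u v h, crossS, Sym2.lift_mk]

lemma Ti_card (i : Fin 6) : (Ti G φ i).card = 5 := by
  rw [← Scard i]
  apply Finset.card_bij (fun v _ => ψ G φ v)
  · intro v hv
    simp only [Ti, Finset.mem_filter, Finset.mem_univ, true_and] at hv ⊢
    exact hv
  · intro v1 h1 v2 h2 hh
    exact (ψ G φ).injective hh
  · intro k hk
    refine ⟨(ψ G φ).symm k, ?_, by simp⟩
    simp only [Ti, Finset.mem_filter, Finset.mem_univ, true_and, Equiv.apply_symm_apply]
    simp only [Finset.mem_filter, Finset.mem_univ, true_and] at hk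
    exact hk

lemma Ti_oddshore (i : Fin 6) : G.IsOddShore (Ti G φ i) := by
  constructor
  · rw [Ti_card]; exact ⟨2, rfl⟩
  · have hV : Fintype.card V = 10 := by rw [Fintype.card_congr (ψ G φ)]; simp
    rw [Finset.card_compl, Ti_card, hV]; exact ⟨2, rfl⟩

noncomputable def αz (r : ℕ) (i : Fin 6) : ℤ := ((G.cut (Ti G φ i)).card : ℤ) - r

lemma αz_nonneg (r : ℕ) (hodd : ∀ S : Finset V, G.IsOddShore S → r ≤ (G.cut S).card)
    (i : Fin 6) : 0 ≤ αz G φ r i := by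
  rw [αz, sub_nonneg]
  exact_mod_cast hodd (Ti G φ i) (Ti_oddshore G φ i)

lemma handshake (r : ℕ) (hreg : ∀ v : V, G.degree v = r) (w : Fin 10 → ℤ) :
    ∑ e : E, (∑ v ∈ univ.filter (fun v => G.Inc e v), w (ψ G φ v))
      = r * ∑ m : Fin 10, w m := by
  have step1 : ∀ e : E, ∑ v ∈ univ.filter (fun v => G.Inc e v), w (ψ G φ v)
      = ∑ v : V, if G.Inc e v then w (ψ G φ v) else 0 := by
    intro e; rw [Finset.sum_filter]
  simp only [step1]
  rw [Finset.sum_comm]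
  have step2 : ∀ v : V, ∑ e : E, (if G.Inc e v then w (ψ G φ v) else 0)
      = (r : ℤ) * w (ψ G φ v) := by
    intro v
    rw [← Finset.sum_filter, Finset.sum_const, ← hreg v, Multigraph.degree]
    simp [nsmul_eq_mul]
  simp only [step2]
  rw [← Finset.mul_sum, Equiv.sum_comp (ψ G φ) w]

lemma key (hl : G.Loopless) (r : ℕ) (hreg : ∀ v : V, G.degree v = r) (e₀ : E) :
    αz G φ r (loS (πe G φ e₀)) + αz G φ r (hiS (πe G φ e₀))
      = 4 * (cE G φ (πe G φ e₀) : ℤ) := by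
  obtain ⟨u₀, v₀, h₀, hne₀, hadj₀⟩ := ends_rep G φ hl e₀
  have hπ₀ : πe G φ e₀ = s(ψ G φ u₀, ψ G φ v₀) := pi_pair G φ e₀ u₀ v₀ h₀
  set k₀ := ψ G φ u₀ with hk₀
  set l₀ := ψ G φ v₀ with hl₀
  have hpt : ∀ e : E,
      (2 * (if crossS (lo10 k₀ l₀) (πe G φ e) = true then (1:ℤ) else 0)
      + 2 * (if crossS (hi10 k₀ l₀) (πe G φ e) = true then (1:ℤ) else 0))
      - 8 * (if πe G φ e = πe G φ e₀ then (1:ℤ) else 0)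
      = ∑ v ∈ univ.filter (fun v => G.Inc e v), q10 k₀ l₀ (ψ G φ v) := by
    intro e
    obtain ⟨u, v, h, hne, hadj⟩ := ends_rep G φ hl e
    rw [inc_filter G e u v h, Finset.sum_pair hne]
    rw [pi_pair G φ e u v h, hπ₀]
    have hq := q_main k₀ l₀ (ψ G φ u) (ψ G φ v) hadj₀ hadj
    simp only [crossS, Sym2.lift_mk, Sym2.eq_iff]
    convert hq using 3 <;> congr
  have hsum : (∑ e : E, ((2 * (if crossS (lo10 k₀ l₀) (πe G φ e) = true then (1:ℤ) else 0)
      + 2 * (if crossS (hi10 k₀ l₀) (πe G φ e) = true then (1:ℤ) else 0))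
      - 8 * (if πe G φ e = πe G φ e₀ then (1:ℤ) else 0)))
      = (r : ℤ) * 4 := by
    rw [Finset.sum_congr rfl (fun e _ => hpt e), handshake G φ r hreg, q_sum k₀ l₀ hadj₀]
  rw [Finset.sum_sub_distrib, Finset.sum_add_distrib, ← Finset.mul_sum, ← Finset.mul_sum,
    ← Finset.mul_sum, Finset.sum_boole, Finset.sum_boole, Finset.sum_boole] at hsum
  rw [show (Finset.filter (fun e => crossS (lo10 k₀ l₀) (πe G φ e) = true) univ)
      = G.cut (Ti G φ (lo10 k₀ l₀)) from (cut_eq G φ hl _).symm] at hsum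
  rw [show (Finset.filter (fun e => crossS (hi10 k₀ l₀) (πe G φ e) = true) univ)
      = G.cut (Ti G φ (hi10 k₀ l₀)) from (cut_eq G φ hl _).symm] at hsum
  have hlo' : loS (πe G φ e₀) = lo10 k₀ l₀ := by rw [hπ₀, loS, Sym2.lift_mk]
  have hhi' : hiS (πe G φ e₀) = hi10 k₀ l₀ := by rw [hπ₀, hiS, Sym2.lift_mk]
  rw [hlo', hhi', αz, αz]
  have h1 : (cE G φ (πe G φ e₀) : ℤ)
      = ((univ.filter (fun e : E => πe G φ e = πe G φ e₀)).card : ℤ) := rfl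
  rw [h1]
  linarith [hsum]

lemma dvd_pairs (hl : G.Loopless) (r : ℕ) (hreg : ∀ v : V, G.degree v = r) :
    ∀ i j : Fin 6, i ≠ j → (4:ℤ) ∣ (αz G φ r i + αz G φ r j) := by
  have base : ∀ i j : Fin 6, i < j → (4:ℤ) ∣ (αz G φ r i + αz G φ r j) := by
    intro i j hij
    obtain ⟨k, l, hadj, hlo, hhi⟩ := pair_ex i j hij
    obtain ⟨e, he⟩ := exists_copy G φ k l hadj
    have hkey := key G φ hl r hreg e
    rw [he] at hkey
    simp only [loS, hiS, Sym2.lift_mk] at hkey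
    rw [hlo, hhi] at hkey
    exact ⟨_, hkey⟩
  intro i j hij
  rcases lt_or_gt_of_ne hij with h | h
  · exact base i j h
  · rw [add_comm]; exact base j i h

lemma main_cases (hl : G.Loopless) (r : ℕ) (hreg : ∀ v : V, G.degree v = r)
    (hodd : ∀ S : Finset V, G.IsOddShore S → r ≤ (G.cut S).card) :
    (∃ a : Fin 6 → ℕ, ∀ i, αz G φ r i = 4 * a i) ∨
    (∃ b : Fin 6 → ℕ, ∀ i, αz G φ r i = 4 * b i + 2) := by
  have hnn := αz_nonneg G φ r hodd
  have hd := dvd_pairs G φ hl r hreg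
  have h01 := hd 0 1 (by decide)
  have h02 := hd 0 2 (by decide)
  have h12 := hd 1 2 (by decide)
  have key0 : ∀ i : Fin 6, αz G φ r i % 4 = 0 ∨ αz G φ r i % 4 = 2 := by
    intro i
    rcases eq_or_ne i 0 with rfl | hi0
    · omega
    rcases eq_or_ne i 1 with rfl | hi1
    · omega
    have ha := hd i 0 hi0
    have hb := hd i 1 hi1
    omega
  have same : ∀ i : Fin 6, αz G φ r i % 4 = αz G φ r 0 % 4 := by
    intro i
    rcases eq_or_ne i 0 with rfl | hi0
    · rfl
    have ha := hd i 0 hi0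
    have h0 := key0 0; have hi := key0 i
    omega
  rcases key0 0 with h | h
  · left
    refine ⟨fun i => (αz G φ r i / 4).toNat, fun i => ?_⟩
    show αz G φ r i = 4 * ((αz G φ r i / 4).toNat : ℤ)
    have := same i; have := key0 i; have := hnn i; omega
  · right
    refine ⟨fun i => ((αz G φ r i - 2) / 4).toNat, fun i => ?_⟩
    show αz G φ r i = 4 * (((αz G φ r i - 2) / 4).toNat : ℤ) + 2
    have := same i; have := key0 i; have := hnn i; omega

variable (a : Fin 6 → ℕ) (pad : ℕ)

noncomputable def loE (e : E) : Fin 6 := loS (πe G φ e)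
noncomputable def hiE (e : E) : Fin 6 := hiS (πe G φ e)

noncomputable def asg (e : E) : (Fin 6 × ℕ) ⊕ Unit :=
  if slot G φ e < a (loE G φ e) then Sum.inl (loE G φ e, slot G φ e)
  else if slot G φ e < a (loE G φ e) + a (hiE G φ e) then
    Sum.inl (hiE G φ e, slot G φ e - a (loE G φ e))
  else Sum.inr ()

noncomputable def Lmat (i : Fin 6) (t : ℕ) : Finset E :=
  univ.filter fun e => asg G φ a e = Sum.inl (i, t)

noncomputable def Hmat (i : Fin 6) : Finset E :=
  univ.filter fun e => asg G φ a e = Sum.inr () ∧ (loE G φ e = i ∨ hiE G φ e = i)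

lemma mem_Lmat (e : E) (i : Fin 6) (t : ℕ) :
    e ∈ Lmat G φ a i t ↔ asg G φ a e = Sum.inl (i, t) := by
  simp [Lmat]

lemma mem_Hmat (e : E) (i : Fin 6) :
    e ∈ Hmat G φ a i ↔ (asg G φ a e = Sum.inr () ∧ (loE G φ e = i ∨ hiE G φ e = i)) := by
  simp [Hmat]

lemma crossS_mk (i : Fin 6) (k l : Fin 10) : crossS i s(k, l) = cross10 i k l := rfl
lemma loS_mk (k l : Fin 10) : loS s(k, l) = lo10 k l := rfl
lemma hiS_mk (k l : Fin 10) : hiS s(k, l) = hi10 k l := rfl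

lemma edge_ne (hl : G.Loopless) (e : E) : loE G φ e ≠ hiE G φ e := by
  obtain ⟨u, v, h, hne, hadj⟩ := ends_rep G φ hl e
  rw [loE, hiE, pi_pair G φ e u v h, loS, hiS, Sym2.lift_mk, Sym2.lift_mk]
  exact ne_of_lt (lo_hi_fact _ _ hadj).1

lemma edge_cross (hl : G.Loopless) (e : E) (i : Fin 6) :
    crossS i (πe G φ e) = true ↔ (i = loE G φ e ∨ i = hiE G φ e) := by
  obtain ⟨u, v, h, hne, hadj⟩ := ends_rep G φ hl e
  rw [loE, hiE, pi_pair G φ e u v h, crossS_mk, loS_mk, hiS_mk,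
    (lo_hi_fact _ _ hadj).2.2.2 i]
  simp

lemma asg_inl_inv (e : E) (i : Fin 6) (t : ℕ) (h : asg G φ a e = Sum.inl (i, t)) :
    (loE G φ e = i ∧ slot G φ e = t ∧ t < a i) ∨
    (hiE G φ e = i ∧ slot G φ e = a (loE G φ e) + t ∧ t < a i) := by
  rw [asg] at h
  split_ifs at h with h1 h2
  · left
    have hh := Sum.inl.inj h
    have hh1 : loE G φ e = i := (Prod.ext_iff.mp hh).1
    have hh2 : slot G φ e = t := (Prod.ext_iff.mp hh).2
    rw [hh1] at h1
    exact ⟨hh1, hh2, by omega⟩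
  · right
    have hh := Sum.inl.inj h
    have hh1 : hiE G φ e = i := (Prod.ext_iff.mp hh).1
    have hh2 : slot G φ e - a (loE G φ e) = t := (Prod.ext_iff.mp hh).2
    rw [hh1] at h2
    exact ⟨hh1, by omega, by omega⟩

lemma asg_inr_inv (e : E) (h : asg G φ a e = Sum.inr ()) :
    a (loE G φ e) + a (hiE G φ e) ≤ slot G φ e := by
  rw [asg] at h
  split_ifs at h with h1 h2
  omega

lemma unique_incident (hl : G.Loopless) (v : V) (i : Fin 6) :
    ∃ k l : Fin 10, k = ψ G φ v ∧ adj10 k l = true ∧ cross10 i k l = true ∧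
      (∀ e : E, G.Inc e v → crossS i (πe G φ e) = true → πe G φ e = s(k, l)) := by
  set k := ψ G φ v with hk
  obtain ⟨l, hfil⟩ := Finset.card_eq_one.mp (pm_unique i k)
  have hmem : adj10 k l = true ∧ cross10 i k l = true := by
    have : l ∈ Finset.filter (fun l => adj10 k l = true ∧ cross10 i k l = true) univ := by
      rw [hfil]; exact Finset.mem_singleton_self l
    simpa using this
  refine ⟨k, l, rfl, hmem.1, hmem.2, ?_⟩
  intro e hinc hcr
  obtain ⟨u, w, h, hne, hadj⟩ := ends_rep G φ hl e
  have hv : v = u ∨ v = w := by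
    have := hinc
    rw [Multigraph.Inc, h, Sym2.mem_iff] at this
    exact this
  have hpi := pi_pair G φ e u w h
  rcases hv with rfl | rfl
  · have hcr' : cross10 i k (ψ G φ w) = true := by
      rw [hpi, crossS_mk] at hcr; exact hcr
    have : ψ G φ w ∈ Finset.filter (fun l => adj10 k l = true ∧ cross10 i k l = true) univ := by
      simp only [Finset.mem_filter, Finset.mem_univ, true_and]
      exact ⟨hadj, hcr'⟩
    rw [hfil, Finset.mem_singleton] at this
    rw [hpi, this]
  · have hadj' : adj10 k (ψ G φ u) = true := by rw [adj10_symm]; exact hadj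
    have hcr' : cross10 i k (ψ G φ u) = true := by
      rw [hpi, crossS_mk] at hcr
      rw [cross10_symm]; exact hcr
    have : ψ G φ u ∈ Finset.filter (fun l => adj10 k l = true ∧ cross10 i k l = true) univ := by
      simp only [Finset.mem_filter, Finset.mem_univ, true_and]
      exact ⟨hadj', hcr'⟩
    rw [hfil, Finset.mem_singleton] at this
    rw [hpi, this, Sym2.eq_swap]

lemma cE_val (hc : ∀ e : E, cE G φ (πe G φ e) = a (loE G φ e) + a (hiE G φ e) + pad)
    (k l : Fin 10) (hadj : adj10 k l = true) :
    cE G φ s(k, l) = a (lo10 k l) + a (hi10 k l) + pad := by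
  obtain ⟨e', he'⟩ := exists_copy G φ k l hadj
  have hcc := hc e'
  rw [loE, hiE] at hcc
  rw [he'] at hcc
  rw [loS, hiS, Sym2.lift_mk, Sym2.lift_mk] at hcc
  exact hcc

lemma exu_L (hl : G.Loopless)
    (hc : ∀ e : E, cE G φ (πe G φ e) = a (loE G φ e) + a (hiE G φ e) + pad)
    (v : V) (i : Fin 6) (t : ℕ) (ht : t < a i) :
    ∃! e : E, G.Inc e v ∧ asg G φ a e = Sum.inl (i, t) := by
  obtain ⟨k, l, hk, hadj, hcr, huniq⟩ := unique_incident G φ hl v i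
  have hcval := cE_val G φ a pad hc k l hadj
  have hilo : i = lo10 k l ∨ i = hi10 k l := by
    have h2 := (lo_hi_fact k l hadj).2.2.2 i
    rw [hcr] at h2
    have := h2.symm
    simpa using this
  have hlone : lo10 k l ≠ hi10 k l := ne_of_lt (lo_hi_fact k l hadj).1
  have hincpick : ∀ (t' : ℕ) (ht' : t' < cE G φ s(k, l)), G.Inc (pick G φ s(k,l) t' ht') v := by
    intro t' ht'
    rw [inc_iff G φ _ v, pick_pi, ← hk, Sym2.mem_iff]
    exact Or.inl rfl
  have hloE : ∀ (t' : ℕ) (ht' : t' < cE G φ s(k, l)),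
      loE G φ (pick G φ s(k,l) t' ht') = lo10 k l ∧ hiE G φ (pick G φ s(k,l) t' ht') = hi10 k l := by
    intro t' ht'
    rw [loE, hiE, pick_pi, loS_mk, hiS_mk]
    exact ⟨rfl, rfl⟩
  rcases hilo with rfl | rfl
  · -- i = lo10 k l
    have ht' : t < cE G φ s(k, l) := by omega
    set e := pick G φ s(k,l) t ht' with he
    have hasg : asg G φ a e = Sum.inl (lo10 k l, t) := by
      rw [asg, (hloE t ht').1, (hloE t ht').2, slot_pick, if_pos ht]
    refine ⟨e, ⟨hincpick t ht', hasg⟩, ?_⟩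
    intro e'' ⟨hinc'', hasg''⟩
    have hcr'' : crossS (lo10 k l) (πe G φ e'') = true := by
      rw [edge_cross G φ hl]
      rcases asg_inl_inv G φ a e'' _ _ hasg'' with ⟨hh, -⟩ | ⟨hh, -⟩
      · exact Or.inl hh.symm
      · exact Or.inr hh.symm
    have hpi'' := huniq e'' hinc'' hcr''
    have hlo'' : loE G φ e'' = lo10 k l ∧ hiE G φ e'' = hi10 k l := by
      rw [loE, hiE, hpi'', loS_mk, hiS_mk]; exact ⟨rfl, rfl⟩
    rcases asg_inl_inv G φ a e'' _ _ hasg'' with ⟨hh, hsl, -⟩ | ⟨hh, hsl, -⟩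
    · apply fiber_unique G φ e'' e
      · rw [hpi'', pick_pi]
      · rw [hsl, slot_pick]
    · rw [hlo''.2] at hh
      exact absurd hh.symm hlone
  · -- i = hi10 k l
    have ht' : a (lo10 k l) + t < cE G φ s(k, l) := by omega
    set e := pick G φ s(k,l) (a (lo10 k l) + t) ht' with he
    have hasg : asg G φ a e = Sum.inl (hi10 k l, t) := by
      rw [asg, (hloE _ ht').1, (hloE _ ht').2, slot_pick]
      rw [if_neg (by omega), if_pos (by omega)]
      congr 2
      omega
    refine ⟨e, ⟨hincpick _ ht', hasg⟩, ?_⟩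
    intro e'' ⟨hinc'', hasg''⟩
    have hcr'' : crossS (hi10 k l) (πe G φ e'') = true := by
      rw [edge_cross G φ hl]
      rcases asg_inl_inv G φ a e'' _ _ hasg'' with ⟨hh, -⟩ | ⟨hh, -⟩
      · exact Or.inl hh.symm
      · exact Or.inr hh.symm
    have hpi'' := huniq e'' hinc'' hcr''
    have hlo'' : loE G φ e'' = lo10 k l ∧ hiE G φ e'' = hi10 k l := by
      rw [loE, hiE, hpi'', loS_mk, hiS_mk]; exact ⟨rfl, rfl⟩
    rcases asg_inl_inv G φ a e'' _ _ hasg'' with ⟨hh, hsl, -⟩ | ⟨hh, hsl, -⟩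
    · exact absurd (hlo''.1 ▸ hh) hlone
    · apply fiber_unique G φ e'' e
      · rw [hpi'', pick_pi]
      · rw [hsl, slot_pick, hlo''.1]

lemma exu_H (hl : G.Loopless)
    (hc : ∀ e : E, cE G φ (πe G φ e) = a (loE G φ e) + a (hiE G φ e) + pad)
    (hp : pad = 1) (v : V) (i : Fin 6) :
    ∃! e : E, G.Inc e v ∧ (asg G φ a e = Sum.inr () ∧ (loE G φ e = i ∨ hiE G φ e = i)) := by
  obtain ⟨k, l, hk, hadj, hcr, huniq⟩ := unique_incident G φ hl v i
  have hcval := cE_val G φ a pad hc k l hadj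
  have hilo : i = lo10 k l ∨ i = hi10 k l := by
    have h2 := (lo_hi_fact k l hadj).2.2.2 i
    rw [hcr] at h2
    have := h2.symm
    simpa using this
  have ht' : a (lo10 k l) + a (hi10 k l) < cE G φ s(k, l) := by omega
  set e := pick G φ s(k,l) (a (lo10 k l) + a (hi10 k l)) ht' with he
  have hloE : loE G φ e = lo10 k l ∧ hiE G φ e = hi10 k l := by
    rw [loE, hiE, pick_pi, loS_mk, hiS_mk]; exact ⟨rfl, rfl⟩
  have hasg : asg G φ a e = Sum.inr () := by
    rw [asg, hloE.1, hloE.2, slot_pick, if_neg (by omega), if_neg (by omega)]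
  refine ⟨e, ⟨?_, hasg, ?_⟩, ?_⟩
  · rw [inc_iff G φ _ v, pick_pi, ← hk, Sym2.mem_iff]
    exact Or.inl rfl
  · rcases hilo with rfl | rfl
    · exact Or.inl hloE.1
    · exact Or.inr hloE.2
  · intro e'' ⟨hinc'', hasg'', hor''⟩
    have hcr'' : crossS i (πe G φ e'') = true := by
      rw [edge_cross G φ hl]
      rcases hor'' with hh | hh
      · exact Or.inl hh.symm
      · exact Or.inr hh.symm
    have hpi'' := huniq e'' hinc'' hcr''
    have hlo'' : loE G φ e'' = lo10 k l ∧ hiE G φ e'' = hi10 k l := by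
      rw [loE, hiE, hpi'', loS_mk, hiS_mk]; exact ⟨rfl, rfl⟩
    have hge := asg_inr_inv G φ a e'' hasg''
    rw [hlo''.1, hlo''.2] at hge
    have hlt := slot_lt G φ e''
    rw [hpi''] at hlt
    apply fiber_unique G φ e'' e
    · rw [hpi'', pick_pi]
    · rw [slot_pick]
      omega

lemma card_filter_one {p : E → Prop} [DecidablePred p] (h : ∃! e : E, p e) :
    ((univ : Finset E).filter p).card = 1 := by
  obtain ⟨e, he, hu⟩ := h
  rw [Finset.card_eq_one]
  refine ⟨e, ?_⟩
  ext e'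
  simp only [Finset.mem_filter, Finset.mem_univ, true_and, Finset.mem_singleton]
  exact ⟨fun hp => hu e' hp, fun hh => hh ▸ he⟩

lemma isPM_L (hl : G.Loopless)
    (hc : ∀ e : E, cE G φ (πe G φ e) = a (loE G φ e) + a (hiE G φ e) + pad)
    (i : Fin 6) (t : ℕ) (ht : t < a i) : G.IsPM (Lmat G φ a i t) := by
  intro v
  rw [Lmat, Finset.filter_filter]
  apply card_filter_one
  obtain ⟨e, ⟨h1, h2⟩, hu⟩ := exu_L G φ a pad hl hc v i t ht
  exact ⟨e, ⟨h2, h1⟩, fun y hy => hu y ⟨hy.2, hy.1⟩⟩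

lemma isPM_H (hl : G.Loopless)
    (hc : ∀ e : E, cE G φ (πe G φ e) = a (loE G φ e) + a (hiE G φ e) + pad)
    (hp : pad = 1) (i : Fin 6) : G.IsPM (Hmat G φ a i) := by
  intro v
  rw [Hmat, Finset.filter_filter]
  apply card_filter_one
  obtain ⟨e, ⟨h1, h2⟩, hu⟩ := exu_H G φ a pad hl hc hp v i
  exact ⟨e, ⟨h2, h1⟩, fun y hy => hu y ⟨hy.2, hy.1⟩⟩

noncomputable def nx (M : Finset E) : ℕ :=
  ∑ i : Fin 6, ((Finset.range (a i)).filter fun t => Lmat G φ a i t = M).card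

noncomputable def hx (M : Finset E) : ℕ :=
  (univ.filter fun i : Fin 6 => Hmat G φ a i = M).card

noncomputable def xf (M : Finset E) : ℝ :=
  (nx G φ a M : ℝ) + (if pad = 1 then (1/2 : ℝ) * (hx G φ a M : ℝ) else 0)

lemma xf_nonneg (M : Finset E) : 0 ≤ xf G φ a pad M := by
  rw [xf]
  have h1 : (0:ℝ) ≤ (nx G φ a M : ℝ) := Nat.cast_nonneg _
  have h2 : (0:ℝ) ≤ (if pad = 1 then (1/2 : ℝ) * (hx G φ a M : ℝ) else 0) := by
    split_ifs
    · positivity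
    · exact le_refl 0
  exact add_nonneg h1 h2

lemma pm_nonempty (hV : Nonempty V) (M : Finset E) (h : G.IsPM M) : M.Nonempty := by
  obtain ⟨v⟩ := hV
  obtain ⟨e, he⟩ := Finset.card_eq_one.mp (h v)
  refine ⟨e, ?_⟩
  have : e ∈ M.filter fun e => G.Inc e v := by rw [he]; exact Finset.mem_singleton_self e
  exact (Finset.mem_filter.mp this).1

lemma L_det (hl : G.Loopless)
    (hc : ∀ e : E, cE G φ (πe G φ e) = a (loE G φ e) + a (hiE G φ e) + pad)
    (i : Fin 6) (t : ℕ) (ht : t < a i) (i' : Fin 6) (t' : ℕ)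
    (heq : Lmat G φ a i t = Lmat G φ a i' t') : i = i' ∧ t = t' := by
  obtain ⟨e, he⟩ := pm_nonempty G ⟨(ψ G φ).symm 0⟩ _ (isPM_L G φ a pad hl hc i t ht)
  have h1 := (mem_Lmat G φ a e i t).mp he
  have h2 := (mem_Lmat G φ a e i' t').mp (heq ▸ he)
  rw [h1] at h2
  have hh := Sum.inl.inj h2
  exact ⟨(Prod.ext_iff.mp hh).1, (Prod.ext_iff.mp hh).2⟩

lemma H_ne_L (hl : G.Loopless)
    (hc : ∀ e : E, cE G φ (πe G φ e) = a (loE G φ e) + a (hiE G φ e) + pad)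
    (hp : pad = 1) (i : Fin 6) (i' : Fin 6) (t' : ℕ) :
    Hmat G φ a i ≠ Lmat G φ a i' t' := by
  intro heq
  obtain ⟨e, he⟩ := pm_nonempty G ⟨(ψ G φ).symm 0⟩ _ (isPM_H G φ a pad hl hc hp i)
  have h1 := ((mem_Hmat G φ a e i).mp he).1
  have h2 := (mem_Lmat G φ a e i' t').mp (heq ▸ he)
  rw [h1] at h2
  exact absurd h2 (by simp)

lemma H_det (hl : G.Loopless)
    (hc : ∀ e : E, cE G φ (πe G φ e) = a (loE G φ e) + a (hiE G φ e) + pad)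
    (hp : pad = 1) (i j : Fin 6) (heq : Hmat G φ a i = Hmat G φ a j) : i = j := by
  by_contra hne
  obtain ⟨k, l, hadj, hcri, hcrj⟩ := sep_ex i j hne
  have hcval := cE_val G φ a pad hc k l hadj
  have ht' : a (lo10 k l) + a (hi10 k l) < cE G φ s(k, l) := by omega
  set e := pick G φ s(k,l) (a (lo10 k l) + a (hi10 k l)) ht' with he
  have hloE : loE G φ e = lo10 k l ∧ hiE G φ e = hi10 k l := by
    rw [loE, hiE, pick_pi, loS_mk, hiS_mk]; exact ⟨rfl, rfl⟩
  have hasg : asg G φ a e = Sum.inr () := by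
    rw [asg, hloE.1, hloE.2, slot_pick, if_neg (by omega), if_neg (by omega)]
  have hilo : i = lo10 k l ∨ i = hi10 k l := by
    have h2 := (lo_hi_fact k l hadj).2.2.2 i
    rw [hcri] at h2
    have := h2.symm
    simpa using this
  have hmemi : e ∈ Hmat G φ a i := by
    rw [mem_Hmat]
    refine ⟨hasg, ?_⟩
    rcases hilo with rfl | rfl
    · exact Or.inl hloE.1
    · exact Or.inr hloE.2
  have hmemj := heq ▸ hmemi
  have hjlo : j = lo10 k l ∨ j = hi10 k l := by
    rcases ((mem_Hmat G φ a e j).mp hmemj).2 with hh | hh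
    · exact Or.inl ((hloE.1 ▸ hh : lo10 k l = j)).symm
    · exact Or.inr ((hloE.2 ▸ hh : hi10 k l = j)).symm
  have hcrj' : cross10 j k l = true := by
    rw [(lo_hi_fact k l hadj).2.2.2 j]
    rcases hjlo with rfl | rfl <;> simp
  rw [hcrj'] at hcrj
  exact absurd hcrj (by simp)

lemma nx_L (hl : G.Loopless)
    (hc : ∀ e : E, cE G φ (πe G φ e) = a (loE G φ e) + a (hiE G φ e) + pad)
    (i : Fin 6) (t : ℕ) (ht : t < a i) : 1 ≤ nx G φ a (Lmat G φ a i t) := by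
  have hterm : 1 ≤ ((Finset.range (a i)).filter fun t' => Lmat G φ a i t' = Lmat G φ a i t).card := by
    refine Finset.card_pos.mpr ⟨t, ?_⟩
    simp [Finset.mem_range, ht]
  rw [nx]
  calc 1 ≤ _ := hterm
    _ ≤ ∑ j : Fin 6, ((Finset.range (a j)).filter fun t' => Lmat G φ a j t' = Lmat G φ a i t).card :=
      Finset.single_le_sum
        (f := fun j : Fin 6 => ((Finset.range (a j)).filter fun t' => Lmat G φ a j t' = Lmat G φ a i t).card)
        (fun j _ => Nat.zero_le _) (Finset.mem_univ i)

lemma nx_H (hl : G.Loopless)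
    (hc : ∀ e : E, cE G φ (πe G φ e) = a (loE G φ e) + a (hiE G φ e) + pad)
    (hp : pad = 1) (i : Fin 6) : nx G φ a (Hmat G φ a i) = 0 := by
  rw [nx]
  apply Finset.sum_eq_zero
  intro j _
  rw [Finset.card_eq_zero, Finset.filter_eq_empty_iff]
  intro t' ht'
  exact fun hh => H_ne_L G φ a pad hl hc hp i j t' hh.symm

lemma hx_L (hl : G.Loopless)
    (hc : ∀ e : E, cE G φ (πe G φ e) = a (loE G φ e) + a (hiE G φ e) + pad)
    (hp : pad = 1) (i : Fin 6) (t : ℕ) : hx G φ a (Lmat G φ a i t) = 0 := by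
  rw [hx, Finset.card_eq_zero, Finset.filter_eq_empty_iff]
  intro j _
  exact H_ne_L G φ a pad hl hc hp j i t

lemma hx_H (hl : G.Loopless)
    (hc : ∀ e : E, cE G φ (πe G φ e) = a (loE G φ e) + a (hiE G φ e) + pad)
    (hp : pad = 1) (i : Fin 6) : hx G φ a (Hmat G φ a i) = 1 := by
  rw [hx]
  have : (univ.filter fun j : Fin 6 => Hmat G φ a j = Hmat G φ a i) = {i} := by
    ext j
    simp only [Finset.mem_filter, Finset.mem_univ, true_and, Finset.mem_singleton]
    exact ⟨fun hh => H_det G φ a pad hl hc hp j i hh, fun hh => hh ▸ rfl⟩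
  rw [this, Finset.card_singleton]

lemma support_x (M : Finset E) (h : xf G φ a pad M ≠ 0) :
    (∃ i t, t < a i ∧ M = Lmat G φ a i t) ∨ (pad = 1 ∧ ∃ i, M = Hmat G φ a i) := by
  by_cases hnx : nx G φ a M = 0
  · right
    rw [xf, hnx] at h
    simp only [Nat.cast_zero, zero_add] at h
    split_ifs at h with hp
    · refine ⟨hp, ?_⟩
      have hxne : hx G φ a M ≠ 0 := by
        intro hh; rw [hh] at h; simp at h
      rw [hx] at hxne
      have hne : (univ.filter fun i : Fin 6 => Hmat G φ a i = M).Nonempty :=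
        Finset.card_pos.mp (Nat.pos_of_ne_zero hxne)
      obtain ⟨i, hi⟩ := hne
      exact ⟨i, ((Finset.mem_filter.mp hi).2).symm⟩
    · exact absurd rfl h
  · left
    rw [nx] at hnx
    obtain ⟨i, -, hi⟩ := Finset.exists_ne_zero_of_sum_ne_zero hnx
    have hne : ((Finset.range (a i)).filter fun t => Lmat G φ a i t = M).Nonempty :=
      Finset.card_pos.mp (Nat.pos_of_ne_zero hi)
    obtain ⟨t, hmem⟩ := hne
    rw [Finset.mem_filter, Finset.mem_range] at hmem
    exact ⟨i, t, hmem.1, hmem.2.symm⟩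

lemma sumL_inl (e : E) (i₀ : Fin 6) (t₀ : ℕ) (heq : asg G φ a e = Sum.inl (i₀, t₀))
    (ht₀ : t₀ < a i₀) :
    ∑ i : Fin 6, ∑ t ∈ Finset.range (a i), (if e ∈ Lmat G φ a i t then (1:ℝ) else 0) = 1 := by
  have hterm : ∀ i : Fin 6, ∑ t ∈ Finset.range (a i), (if e ∈ Lmat G φ a i t then (1:ℝ) else 0)
      = if i = i₀ then 1 else 0 := by
    intro i
    by_cases hi : i = i₀
    · subst hi
      rw [if_pos rfl]
      have : ∀ t, (e ∈ Lmat G φ a i t) ↔ (t₀ = t) := by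
        intro t
        rw [mem_Lmat, heq]
        simp [eq_comm]
      simp only [this]
      rw [Finset.sum_ite_eq (Finset.range (a i)) t₀ (fun _ => (1:ℝ))]
      rw [if_pos (Finset.mem_range.mpr ht₀)]
    · rw [if_neg hi]
      apply Finset.sum_eq_zero
      intro t _
      apply if_neg
      rw [mem_Lmat, heq]
      simp only [Sum.inl.injEq, Prod.mk.injEq, not_and]
      intro hh
      exact absurd hh.symm hi
  rw [Finset.sum_congr rfl (fun i _ => hterm i)]
  simp

lemma sumL_inr (e : E) (heq : asg G φ a e = Sum.inr ()) :
    ∑ i : Fin 6, ∑ t ∈ Finset.range (a i), (if e ∈ Lmat G φ a i t then (1:ℝ) else 0) = 0 := by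
  apply Finset.sum_eq_zero
  intro i _
  apply Finset.sum_eq_zero
  intro t _
  apply if_neg
  rw [mem_Lmat, heq]
  simp

lemma sumH_inl (e : E) (i₀ : Fin 6) (t₀ : ℕ) (heq : asg G φ a e = Sum.inl (i₀, t₀)) :
    ∑ i : Fin 6, (if e ∈ Hmat G φ a i then (1/2:ℝ) else 0) = 0 := by
  apply Finset.sum_eq_zero
  intro i _
  apply if_neg
  rw [mem_Hmat, heq]
  simp

lemma sumH_inr (hl : G.Loopless) (e : E) (heq : asg G φ a e = Sum.inr ()) :
    ∑ i : Fin 6, (if e ∈ Hmat G φ a i then (1/2:ℝ) else 0) = 1 := by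
  have hmem : ∀ i : Fin 6, (e ∈ Hmat G φ a i) ↔ (i ∈ ({loE G φ e, hiE G φ e} : Finset (Fin 6))) := by
    intro i
    rw [mem_Hmat]
    simp only [Finset.mem_insert, Finset.mem_singleton]
    constructor
    · rintro ⟨-, hh | hh⟩
      · exact Or.inl hh.symm
      · exact Or.inr hh.symm
    · rintro (hh | hh)
      · exact ⟨heq, Or.inl hh.symm⟩
      · exact ⟨heq, Or.inr hh.symm⟩
  simp only [hmem]
  rw [Finset.sum_ite_mem, Finset.univ_inter, Finset.sum_const,
    Finset.card_pair (edge_ne G φ hl e)]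
  norm_num

lemma coverage (hl : G.Loopless)
    (hc : ∀ e : E, cE G φ (πe G φ e) = a (loE G φ e) + a (hiE G φ e) + pad)
    (hpad01 : pad = 0 ∨ pad = 1) (e : E) :
    ∑ M ∈ univ.filter G.IsPM, (if e ∈ M then xf G φ a pad M else 0) = 1 := by
  have hstep : ∀ M ∈ univ.filter G.IsPM, (if e ∈ M then xf G φ a pad M else 0)
      = (∑ i : Fin 6, ∑ t ∈ Finset.range (a i),
          if M = Lmat G φ a i t ∧ e ∈ Lmat G φ a i t then (1:ℝ) else 0)
        + (if pad = 1 then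
            (∑ i : Fin 6, if M = Hmat G φ a i ∧ e ∈ Hmat G φ a i then (1/2:ℝ) else 0) else 0) := by
    intro M _
    by_cases he : e ∈ M
    · rw [if_pos he, xf]
      congr 1
      · -- nx part
        rw [nx]
        push_cast [Finset.card_filter]
        apply Finset.sum_congr rfl
        intro i _
        apply Finset.sum_congr rfl
        intro t _
        by_cases hM : Lmat G φ a i t = M
        · rw [if_pos hM, if_pos ⟨hM.symm, hM ▸ he⟩]
        · rw [if_neg hM, if_neg (fun hh => hM hh.1.symm)]
      · -- hx part
        by_cases hp : pad = 1
        · rw [if_pos hp, if_pos hp, hx]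
          push_cast [Finset.card_filter]
          rw [Finset.mul_sum]
          apply Finset.sum_congr rfl
          intro i _
          by_cases hM : Hmat G φ a i = M
          · rw [if_pos hM, if_pos ⟨hM.symm, hM ▸ he⟩]
            norm_num
          · rw [if_neg hM, if_neg (fun hh => hM hh.1.symm)]
            norm_num
        · rw [if_neg hp, if_neg hp]
    · rw [if_neg he]
      have hz1 : ∀ i : Fin 6, ∀ t ∈ Finset.range (a i),
          (if M = Lmat G φ a i t ∧ e ∈ Lmat G φ a i t then (1:ℝ) else 0) = 0 := by
        intro i t _
        rw [if_neg]
        rintro ⟨rfl, hh⟩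
        exact he hh
      have hz2 : ∀ i : Fin 6,
          (if M = Hmat G φ a i ∧ e ∈ Hmat G φ a i then (1/2:ℝ) else 0) = 0 := by
        intro i
        rw [if_neg]
        rintro ⟨rfl, hh⟩
        exact he hh
      rw [Finset.sum_congr rfl (fun i _ => Finset.sum_eq_zero (hz1 i))]
      rw [Finset.sum_congr rfl (fun i _ => hz2 i)]
      simp
  rw [Finset.sum_congr rfl hstep, Finset.sum_add_distrib]
  have part1 : ∑ M ∈ univ.filter G.IsPM, (∑ i : Fin 6, ∑ t ∈ Finset.range (a i),
      if M = Lmat G φ a i t ∧ e ∈ Lmat G φ a i t then (1:ℝ) else 0)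
      = ∑ i : Fin 6, ∑ t ∈ Finset.range (a i), (if e ∈ Lmat G φ a i t then (1:ℝ) else 0) := by
    rw [Finset.sum_comm]
    apply Finset.sum_congr rfl
    intro i _
    rw [Finset.sum_comm]
    apply Finset.sum_congr rfl
    intro t ht
    have hLF : Lmat G φ a i t ∈ univ.filter G.IsPM := by
      rw [Finset.mem_filter]
      exact ⟨Finset.mem_univ _, isPM_L G φ a pad hl hc i t (Finset.mem_range.mp ht)⟩
    have hsplit : ∀ M : Finset E, (if M = Lmat G φ a i t ∧ e ∈ Lmat G φ a i t then (1:ℝ) else 0)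
        = if M = Lmat G φ a i t then (if e ∈ Lmat G φ a i t then (1:ℝ) else 0) else 0 := by
      intro M
      by_cases h1 : M = Lmat G φ a i t <;> by_cases h2 : e ∈ Lmat G φ a i t <;>
        simp [h1, h2]
    rw [Finset.sum_congr rfl (fun M _ => hsplit M)]
    rw [Finset.sum_ite_eq' (univ.filter G.IsPM) (Lmat G φ a i t)
      (fun _ => if e ∈ Lmat G φ a i t then (1:ℝ) else 0)]
    rw [if_pos hLF]
  rw [part1]
  rcases hpad01 with hp | hp
  · -- pad = 0
    have hz : ∀ M ∈ univ.filter G.IsPM, (if pad = 1 then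
        (∑ i : Fin 6, if M = Hmat G φ a i ∧ e ∈ Hmat G φ a i then (1/2:ℝ) else 0) else 0) = 0 :=
      fun M _ => if_neg (by omega)
    rw [Finset.sum_congr rfl hz, Finset.sum_const_zero, add_zero]
    cases hasg : asg G φ a e with
    | inl p =>
      obtain ⟨i₀, t₀⟩ := p
      rcases asg_inl_inv G φ a e i₀ t₀ hasg with ⟨-, -, ht⟩ | ⟨-, -, ht⟩ <;>
        exact sumL_inl G φ a e i₀ t₀ hasg ht
    | inr u =>
      exfalso
      cases u
      have h1 := asg_inr_inv G φ a e hasg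
      have h2 := slot_lt G φ e
      have h3 := hc e
      omega
  · -- pad = 1
    have ho : ∀ M ∈ univ.filter G.IsPM, (if pad = 1 then
        (∑ i : Fin 6, if M = Hmat G φ a i ∧ e ∈ Hmat G φ a i then (1/2:ℝ) else 0) else 0)
        = ∑ i : Fin 6, if M = Hmat G φ a i ∧ e ∈ Hmat G φ a i then (1/2:ℝ) else 0 :=
      fun M _ => if_pos hp
    rw [Finset.sum_congr rfl ho]
    have part2 : ∑ M ∈ univ.filter G.IsPM, (∑ i : Fin 6,
        if M = Hmat G φ a i ∧ e ∈ Hmat G φ a i then (1/2:ℝ) else 0)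
        = ∑ i : Fin 6, (if e ∈ Hmat G φ a i then (1/2:ℝ) else 0) := by
      rw [Finset.sum_comm]
      apply Finset.sum_congr rfl
      intro i _
      have hHF : Hmat G φ a i ∈ univ.filter G.IsPM := by
        rw [Finset.mem_filter]
        exact ⟨Finset.mem_univ _, isPM_H G φ a pad hl hc hp i⟩
      have hsplit : ∀ M : Finset E, (if M = Hmat G φ a i ∧ e ∈ Hmat G φ a i then (1/2:ℝ) else 0)
          = if M = Hmat G φ a i then (if e ∈ Hmat G φ a i then (1/2:ℝ) else 0) else 0 := by
        intro M
        by_cases h1 : M = Hmat G φ a i <;> by_cases h2 : e ∈ Hmat G φ a i <;> simp [h1, h2]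
      rw [Finset.sum_congr rfl (fun M _ => hsplit M)]
      rw [Finset.sum_ite_eq' (univ.filter G.IsPM) (Hmat G φ a i)
        (fun _ => if e ∈ Hmat G φ a i then (1/2:ℝ) else 0)]
      rw [if_pos hHF]
    rw [part2]
    cases hasg : asg G φ a e with
    | inl p =>
      obtain ⟨i₀, t₀⟩ := p
      have hL : ∑ i : Fin 6, ∑ t ∈ Finset.range (a i),
          (if e ∈ Lmat G φ a i t then (1:ℝ) else 0) = 1 := by
        rcases asg_inl_inv G φ a e i₀ t₀ hasg with ⟨-, -, ht⟩ | ⟨-, -, ht⟩ <;>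
          exact sumL_inl G φ a e i₀ t₀ hasg ht
      rw [hL, sumH_inl G φ a e i₀ t₀ hasg]
      norm_num
    | inr u =>
      cases u
      rw [sumL_inr G φ a e hasg, sumH_inr G φ a hl e hasg]
      norm_num

lemma natCast_ne_half (n : ℕ) : (n : ℝ) ≠ 1/2 := by
  cases n with
  | zero => norm_num
  | succ m =>
    have : (1:ℝ) ≤ ((m+1 : ℕ) : ℝ) := by push_cast; linarith
    intro hh; rw [hh] at this; linarith

lemma xf_L_val (hl : G.Loopless)
    (hc : ∀ e : E, cE G φ (πe G φ e) = a (loE G φ e) + a (hiE G φ e) + pad)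
    (i : Fin 6) (t : ℕ) :
    xf G φ a pad (Lmat G φ a i t) = (nx G φ a (Lmat G φ a i t) : ℝ) := by
  rw [xf]
  by_cases hp : pad = 1
  · rw [if_pos hp, hx_L G φ a pad hl hc hp i t]
    norm_num
  · rw [if_neg hp]; ring

lemma xf_H_val (hl : G.Loopless)
    (hc : ∀ e : E, cE G φ (πe G φ e) = a (loE G φ e) + a (hiE G φ e) + pad)
    (hp : pad = 1) (i : Fin 6) :
    xf G φ a pad (Hmat G φ a i) = 1/2 := by
  rw [xf, nx_H G φ a pad hl hc hp i, hx_H G φ a pad hl hc hp i, if_pos hp]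
  norm_num

lemma supp_eq_L (e : E) (i : Fin 6) (t : ℕ) (hasg : asg G φ a e = Sum.inl (i, t))
    (N : Finset E) (hxN : xf G φ a pad N ≠ 0) (heN : e ∈ N) : N = Lmat G φ a i t := by
  rcases support_x G φ a pad N hxN with ⟨i', t', ht', rfl⟩ | ⟨hp, i', rfl⟩
  · have := (mem_Lmat G φ a e i' t').mp heN
    rw [hasg] at this
    have hh := Sum.inl.inj this
    have h1 : i' = i := (Prod.ext_iff.mp hh).1.symm
    have h2 : t' = t := (Prod.ext_iff.mp hh).2.symm
    rw [Lmat, h1, h2, ← Lmat]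
  · have := ((mem_Hmat G φ a e i').mp heN).1
    rw [hasg] at this
    exact absurd this (by simp)

lemma supp_eq_H (e : E) (hasg : asg G φ a e = Sum.inr ())
    (N : Finset E) (hxN : xf G φ a pad N ≠ 0) (heN : e ∈ N) :
    N = Hmat G φ a (loE G φ e) ∨ N = Hmat G φ a (hiE G φ e) := by
  rcases support_x G φ a pad N hxN with ⟨i', t', ht', rfl⟩ | ⟨hp, i', rfl⟩
  · have := (mem_Lmat G φ a e i' t').mp heN
    rw [hasg] at this
    exact absurd this (by simp)
  · rcases ((mem_Hmat G φ a e i').mp heN).2 with hh | hh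
    · exact Or.inl (by rw [hh])
    · exact Or.inr (by rw [hh])

lemma linind (hl : G.Loopless)
    (hc : ∀ e : E, cE G φ (πe G φ e) = a (loE G φ e) + a (hiE G φ e) + pad)
    (hpad01 : pad = 0 ∨ pad = 1) :
    LinearIndependent ℝ
      (fun M : {M : Finset E // M ∈ (univ.filter G.IsPM).filter fun N => xf G φ a pad N ≠ 0} =>
        (fun e : E => if e ∈ M.1 then (1 : ℝ) else 0)) := by
  rw [Fintype.linearIndependent_iff]
  intro g hg
  have hg' : ∀ e : E,
      (∑ M : {M : Finset E // M ∈ (univ.filter G.IsPM).filter fun N => xf G φ a pad N ≠ 0},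
        g M * (if e ∈ M.1 then (1:ℝ) else 0)) = 0 := by
    intro e
    have := congrFun hg e
    simpa [Finset.sum_apply] using this
  have hterm : ∀ e : E,
      ∀ M : {M : Finset E // M ∈ (univ.filter G.IsPM).filter fun N => xf G φ a pad N ≠ 0},
      g M * (if e ∈ M.1 then (1:ℝ) else 0) = if e ∈ M.1 then g M else 0 := by
    intro e M
    by_cases hh : e ∈ M.1 <;> simp [hh]
  have hxne : ∀ M : {M : Finset E // M ∈ (univ.filter G.IsPM).filter fun N => xf G φ a pad N ≠ 0},
      xf G φ a pad M.1 ≠ 0 := by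
    intro M
    have := M.2
    rw [Finset.mem_filter] at this
    exact this.2
  -- step 1 : L-matchings
  have stepL : ∀ (M : {M : Finset E // M ∈ (univ.filter G.IsPM).filter fun N => xf G φ a pad N ≠ 0})
      (i : Fin 6) (t : ℕ), t < a i → M.1 = Lmat G φ a i t → g M = 0 := by
    intro M i t ht hML
    obtain ⟨e, he⟩ := pm_nonempty G ⟨(ψ G φ).symm 0⟩ _ (isPM_L G φ a pad hl hc i t ht)
    have hasg := (mem_Lmat G φ a e i t).mp he
    have := hg' e
    rw [Finset.sum_congr rfl (fun M _ => hterm e M)] at this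
    rw [Finset.sum_eq_single M] at this
    · rw [hML, if_pos he] at this
      exact this
    · intro N _ hNM
      rw [if_neg]
      intro heN
      exact hNM (Subtype.ext (by rw [supp_eq_L G φ a pad e i t hasg N.1 (hxne N) heN, ← hML]))
    · intro hcon
      exact absurd (Finset.mem_univ M) hcon
  -- step 2 : H-matchings (pad = 1)
  have stepH : ∀ (M : {M : Finset E // M ∈ (univ.filter G.IsPM).filter fun N => xf G φ a pad N ≠ 0})
      (i : Fin 6), pad = 1 → M.1 = Hmat G φ a i → g M = 0 := by
    intro M i hp hMH
    have hmemH : ∀ j : Fin 6, Hmat G φ a j ∈ (univ.filter G.IsPM).filter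
        fun N => xf G φ a pad N ≠ 0 := by
      intro j
      rw [Finset.mem_filter, Finset.mem_filter]
      refine ⟨⟨Finset.mem_univ _, isPM_H G φ a pad hl hc hp j⟩, ?_⟩
      rw [xf_H_val G φ a pad hl hc hp j]
      norm_num
    set b : Fin 6 → ℝ := fun j => g ⟨Hmat G φ a j, hmemH j⟩ with hb
    have claim : ∀ p q : Fin 6, p < q → b p + b q = 0 := by
      intro p q hpq
      obtain ⟨k, l, hadj, hlo, hhi⟩ := pair_ex p q hpq
      have hcval := cE_val G φ a pad hc k l hadj
      have ht' : a (lo10 k l) + a (hi10 k l) < cE G φ s(k, l) := by omega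
      set e := pick G φ s(k,l) (a (lo10 k l) + a (hi10 k l)) ht' with he
      have hloE : loE G φ e = lo10 k l ∧ hiE G φ e = hi10 k l := by
        rw [loE, hiE, pick_pi, loS_mk, hiS_mk]; exact ⟨rfl, rfl⟩
      have hasg : asg G φ a e = Sum.inr () := by
        rw [asg, hloE.1, hloE.2, slot_pick, if_neg (by omega), if_neg (by omega)]
      have hNp : (⟨Hmat G φ a p, hmemH p⟩ :
          {M : Finset E // M ∈ (univ.filter G.IsPM).filter fun N => xf G φ a pad N ≠ 0})
          ≠ ⟨Hmat G φ a q, hmemH q⟩ := by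
        intro hcon
        exact absurd (H_det G φ a pad hl hc hp p q (congrArg Subtype.val hcon)) (ne_of_lt hpq)
      have hsum := hg' e
      rw [Finset.sum_congr rfl (fun M _ => hterm e M)] at hsum
      rw [← Finset.sum_subset
        (Finset.subset_univ ({⟨Hmat G φ a p, hmemH p⟩, ⟨Hmat G φ a q, hmemH q⟩} :
          Finset {M : Finset E // M ∈ (univ.filter G.IsPM).filter fun N => xf G φ a pad N ≠ 0}))
        ?_] at hsum
      · rw [Finset.sum_pair hNp] at hsum
        have hep : e ∈ Hmat G φ a p := by
          rw [mem_Hmat]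
          exact ⟨hasg, Or.inl (by rw [hloE.1, hlo])⟩
        have heq' : e ∈ Hmat G φ a q := by
          rw [mem_Hmat]
          exact ⟨hasg, Or.inr (by rw [hloE.2, hhi])⟩
        rw [if_pos hep, if_pos heq'] at hsum
        exact hsum
      · intro N _ hN
        rw [Finset.mem_insert, Finset.mem_singleton] at hN
        push_neg at hN
        rw [if_neg]
        intro heN
        rcases supp_eq_H G φ a pad e hasg N.1 (hxne N) heN with hh | hh
        · rw [hloE.1, hlo] at hh
          exact hN.1 (Subtype.ext hh)
        · rw [hloE.2, hhi] at hh
          exact hN.2 (Subtype.ext hh)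
    have claim' : ∀ p q : Fin 6, p ≠ q → b p + b q = 0 := by
      intro p q hne
      rcases lt_or_gt_of_ne hne with h | h
      · exact claim p q h
      · rw [add_comm]; exact claim q p h
    have hall : ∀ p : Fin 6, b p = 0 := by
      intro p
      have hex : ∃ q w : Fin 6, p ≠ q ∧ p ≠ w ∧ q ≠ w := by
        revert p; decide
      obtain ⟨q, w, h1, h2, h3⟩ := hex
      have a1 := claim' p q h1
      have a2 := claim' p w h2
      have a3 := claim' q w h3
      linarith
    have := hall i
    rw [hb] at this
    simp only at this
    rw [show M = ⟨Hmat G φ a i, hmemH i⟩ from Subtype.ext hMH]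
    exact this
  intro M
  rcases support_x G φ a pad M.1 (hxne M) with ⟨i, t, ht, hML⟩ | ⟨hp, i, hMH⟩
  · exact stepL M i t ht hML
  · exact stepH M i hp hMH

end PBS

open Multigraph in
/-- if `B` is an `r`-regular multigraph whose underlying simple
graph is the Petersen graph and every odd cut has at least `r` edges, then the
system `Ax = 1` has a nonnegative solution supported on linearly independent
perfect matchings whose entries are all integers, or else have at most `6`
entries equal to `1/2` and all other nonzero entries positive integers. -/
theorem petersen_brick_solution {V E : Type} [Fintype V] [Fintype E]
    (G : Multigraph V E) (hl : G.Loopless)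
    (hpet : Nonempty (G.adj ≃g Petersen))
    (r : ℕ) (hreg : ∀ v : V, G.degree v = r)
    (hodd : ∀ S : Finset V, G.IsOddShore S → r ≤ (G.cut S).card) :
    ∃ x : Finset E → ℝ,
      (∀ e : E, ∑ M ∈ univ.filter G.IsPM, (if e ∈ M then x M else 0) = 1) ∧
      (∀ M, 0 ≤ x M) ∧
      LinearIndependent ℝ
        (fun M : {M : Finset E // M ∈ (univ.filter G.IsPM).filter fun N => x N ≠ 0} =>
          (fun e : E => if e ∈ M.1 then (1 : ℝ) else 0)) ∧
      ((∀ M ∈ (univ.filter G.IsPM).filter fun N => x N ≠ 0,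
          ∃ k : ℕ, 0 < k ∧ x M = (k : ℝ)) ∨
        ((((univ.filter G.IsPM).filter fun N => x N = 1/2).card ≤ 6) ∧
          ∀ M ∈ (univ.filter G.IsPM).filter fun N => x N ≠ 0,
            x M ≠ 1/2 → ∃ k : ℕ, 0 < k ∧ x M = (k : ℝ))) := by
  obtain ⟨φ⟩ := hpet
  have hpick : ∃ (a : Fin 6 → ℕ) (pad : ℕ), (pad = 0 ∨ pad = 1) ∧
      (∀ e : E, PBS.cE G φ (PBS.πe G φ e)
        = a (PBS.loE G φ e) + a (PBS.hiE G φ e) + pad) := by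
    rcases PBS.main_cases G φ hl r hreg hodd with ⟨a, ha⟩ | ⟨a, ha⟩
    · refine ⟨a, 0, Or.inl rfl, ?_⟩
      intro e
      have hk := PBS.key G φ hl r hreg e
      rw [ha (PBS.loS (PBS.πe G φ e)), ha (PBS.hiS (PBS.πe G φ e))] at hk
      rw [PBS.loE, PBS.hiE]
      omega
    · refine ⟨a, 1, Or.inr rfl, ?_⟩
      intro e
      have hk := PBS.key G φ hl r hreg e
      rw [ha (PBS.loS (PBS.πe G φ e)), ha (PBS.hiS (PBS.πe G φ e))] at hk
      rw [PBS.loE, PBS.hiE]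
      omega
  obtain ⟨a, pad, hpad01, hc⟩ := hpick
  refine ⟨PBS.xf G φ a pad, ?_, ?_, ?_, ?_⟩
  · exact PBS.coverage G φ a pad hl hc hpad01
  · exact PBS.xf_nonneg G φ a pad
  · exact PBS.linind G φ a pad hl hc hpad01
  · rcases hpad01 with hp | hp
    · -- integer case
      left
      intro M hM
      rw [Finset.mem_filter] at hM
      have hxne := hM.2
      rcases PBS.support_x G φ a pad M hxne with ⟨i, t, ht, rfl⟩ | ⟨hp1, i, rfl⟩
      · refine ⟨PBS.nx G φ a (PBS.Lmat G φ a i t), ?_, ?_⟩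
        · have h1 := PBS.nx_L G φ a pad hl hc i t ht
          omega
        · exact PBS.xf_L_val G φ a pad hl hc i t
      · rw [hp1] at hp; exact absurd hp (by norm_num)
    · -- half-integral case
      right
      constructor
      · -- at most six entries equal 1/2
        have hsub : ((univ.filter G.IsPM).filter fun N => PBS.xf G φ a pad N = 1/2)
            ⊆ Finset.image (fun i : Fin 6 => PBS.Hmat G φ a i) univ := by
          intro M hM
          rw [Finset.mem_filter] at hM
          have hval := hM.2
          by_cases hhx : PBS.hx G φ a M = 0
          · exfalso
            rw [PBS.xf, hhx, if_pos hp] at hval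
            simp only [Nat.cast_zero, mul_zero, add_zero] at hval
            exact PBS.natCast_ne_half (PBS.nx G φ a M) hval
          · have hne : (univ.filter fun i : Fin 6 => PBS.Hmat G φ a i = M).Nonempty :=
              Finset.card_pos.mp (Nat.pos_of_ne_zero hhx)
            obtain ⟨i, hi⟩ := hne
            rw [Finset.mem_filter] at hi
            exact Finset.mem_image.mpr ⟨i, Finset.mem_univ i, hi.2⟩
        calc ((univ.filter G.IsPM).filter fun N => PBS.xf G φ a pad N = 1/2).card
            ≤ (Finset.image (fun i : Fin 6 => PBS.Hmat G φ a i) univ).card :=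
              Finset.card_le_card hsub
          _ ≤ (univ : Finset (Fin 6)).card := Finset.card_image_le
          _ = 6 := by simp
      · intro M hM hne12
        rw [Finset.mem_filter] at hM
        have hxne := hM.2
        rcases PBS.support_x G φ a pad M hxne with ⟨i, t, ht, rfl⟩ | ⟨-, i, rfl⟩
        · refine ⟨PBS.nx G φ a (PBS.Lmat G φ a i t), ?_, ?_⟩
          · have h1 := PBS.nx_L G φ a pad hl hc i t ht
            omega
          · exact PBS.xf_L_val G φ a pad hl hc i t
        · exact absurd (PBS.xf_H_val G φ a pad hl hc hp i) hne12
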